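/- Let d ≥ 2 and let b be a real number. Suppose T₀ = P + b·(I − P) admits a finite decomposition T₀ = Σ_i c_i (M_i ⊗ N_i) with each c_i ≥ 0 real and each M_i, N_i a rank-one projection on ℂ^d. Then b ≥ 1/(d+1); consequently, for every density matrix σ on ℂ^d ⊗ ℂ^d with θ = ⟨φ⁰, σ φ⁰⟩, one has Tr(σ·T₀) ≥ (d·θ + 1)/(d + 1), and the test T₀ᵘ = P + (1/(d+1))·(I − P) attains equality: Tr(σ·T₀ᵘ) = (d·θ + 1)/(d + 1). -/

import Mathlib

open Matrix
open scoped Matrix Kronecker ComplexOrder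

noncomputable section

/-- The maximally entangled state on `ℂ^d ⊗ ℂ^d`. -/
def maxEnt (d : ℕ) : Fin d × Fin d → ℂ :=
  fun p => if p.1 = p.2 then ((1 / Real.sqrt d : ℝ) : ℂ) else 0

/-- The rank-one projection `P = |φ⁰⟩⟨φ⁰|` onto the maximally entangled state. -/
def projMaxEnt (d : ℕ) : Matrix (Fin d × Fin d) (Fin d × Fin d) ℂ :=
  vecMulVec (maxEnt d) (star (maxEnt d))

/-- A rank-one projection on `ℂ^d`. -/
def IsRankOneProj {d : ℕ} (M : Matrix (Fin d) (Fin d) ℂ) : Prop :=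
  Mᴴ = M ∧ M * M = M ∧ M.trace = 1

/- ### Auxiliary lemmas -/

lemma posSemidef_iff_eq_transpose_mul_self {n : Type*} [Fintype n] [DecidableEq n]
    {A : Matrix n n ℂ} : A.PosSemidef ↔ ∃ B : Matrix n n ℂ, A = Bᴴ * B := by
  open scoped MatrixOrder Matrix.Norms.L2Operator in
  constructor
  · intro hA
    obtain ⟨B, hB⟩ := CStarAlgebra.nonneg_iff_eq_star_mul_self.mp hA.nonneg
    exact ⟨B, hB⟩
  · rintro ⟨B, rfl⟩
    exact posSemidef_conjTranspose_mul_self B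

lemma psd_kron {m n : Type*} [Fintype m] [Fintype n] [DecidableEq m] [DecidableEq n]
    {A : Matrix m m ℂ} {B : Matrix n n ℂ} (hA : A.PosSemidef) (hB : B.PosSemidef) :
    (A ⊗ₖ B).PosSemidef := by
  obtain ⟨X, rfl⟩ := posSemidef_iff_eq_transpose_mul_self.mp hA
  obtain ⟨Y, rfl⟩ := posSemidef_iff_eq_transpose_mul_self.mp hB
  rw [mul_kronecker_mul]
  have h : (Xᴴ ⊗ₖ Yᴴ) = (X ⊗ₖ Y)ᴴ := by
    ext ⟨i, j⟩ ⟨k, l⟩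
    simp [conjTranspose_apply]
  rw [h]
  exact posSemidef_conjTranspose_mul_self _

lemma trace_mul_vecMulVec {n : Type*} [Fintype n] (σ : Matrix n n ℂ) (u : n → ℂ) :
    (σ * vecMulVec u (star u)).trace = star u ⬝ᵥ σ.mulVec u := by
  simp only [trace, diag_apply, mul_apply, vecMulVec_apply, dotProduct, mulVec, Pi.star_apply]
  refine Finset.sum_congr rfl fun q _ => ?_
  rw [Finset.mul_sum]
  refine Finset.sum_congr rfl fun p _ => ?_
  simp [RCLike.star_def]
  ring

lemma psd_trace_nonneg {n : Type*} [Fintype n] [DecidableEq n] {A : Matrix n n ℂ}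
    (hA : A.PosSemidef) : 0 ≤ A.trace := by
  have h : ∀ i : n, 0 ≤ A i i := fun i => by
    have := hA.dotProduct_mulVec_nonneg (Pi.single i 1)
    simpa [mulVec, dotProduct, Pi.single_apply, Finset.sum_ite_eq, Finset.sum_ite_eq'] using this
  exact Finset.sum_nonneg fun i _ => h i

lemma trace_mul_psd_nonneg {n : Type*} [Fintype n] [DecidableEq n] {A B : Matrix n n ℂ}
    (hA : A.PosSemidef) (hB : B.PosSemidef) : 0 ≤ (A * B).trace := by
  obtain ⟨X, rfl⟩ := posSemidef_iff_eq_transpose_mul_self.mp hB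
  rw [← Matrix.mul_assoc, trace_mul_comm, ← Matrix.mul_assoc]
  exact psd_trace_nonneg (hA.mul_mul_conjTranspose_same X)

lemma maxEnt_norm (d : ℕ) (hd : 1 ≤ d) : star (maxEnt d) ⬝ᵥ maxEnt d = 1 := by
  have hd0 : (0:ℝ) < d := by exact_mod_cast hd
  simp only [dotProduct, maxEnt, Pi.star_apply, Fintype.sum_prod_type]
  simp only [apply_ite (star : ℂ → ℂ), star_zero, ite_mul, zero_mul, mul_ite, mul_zero]
  have hsq : ((1 / Real.sqrt d : ℝ) : ℂ) * ((1 / Real.sqrt d : ℝ) : ℂ) = ((1/d : ℝ) : ℂ) := by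
    rw [← Complex.ofReal_mul]
    congr 1
    rw [div_mul_div_comm, one_mul, Real.mul_self_sqrt hd0.le]
  have h1 : ∀ x y : Fin d, (if x = y then (if x = y then (star ((1 / (Real.sqrt d : ℝ) : ℝ) : ℂ) * ((1 / (Real.sqrt d : ℝ) : ℝ) : ℂ)) else 0) else 0) = if y = x then ((1/d : ℝ) : ℂ) else 0 := by
    intro x y
    by_cases h : x = y
    · simp only [h, if_true, RCLike.star_def, Complex.conj_ofReal]
      simp only [one_div, Complex.ofReal_inv]
      rw [← mul_inv]
      congr 1
      norm_cast
      exact Real.mul_self_sqrt hd0.le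
    · rw [if_neg (fun hyx : y = x => h hyx.symm), if_neg h]
  simp only [h1, Finset.sum_ite_eq', Finset.mem_univ, if_true]
  rw [Finset.sum_const, Finset.card_univ, Fintype.card_fin]
  rw [nsmul_eq_mul]
  have hdne : (d:ℂ) ≠ 0 := by exact_mod_cast hd0.ne'
  push_cast
  field_simp

lemma projMaxEnt_herm (d : ℕ) : (projMaxEnt d)ᴴ = projMaxEnt d := by
  ext p q
  simp [projMaxEnt, conjTranspose_apply, vecMulVec_apply, mul_comm]

lemma projMaxEnt_idem (d : ℕ) (hd : 1 ≤ d) : projMaxEnt d * projMaxEnt d = projMaxEnt d := by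
  ext p q
  simp only [projMaxEnt, mul_apply, vecMulVec_apply, Pi.star_apply]
  have : ∑ r, maxEnt d p * star (maxEnt d r) * (maxEnt d r * star (maxEnt d q))
      = (maxEnt d p * star (maxEnt d q)) * (star (maxEnt d) ⬝ᵥ maxEnt d) := by
    rw [dotProduct, Finset.mul_sum]
    exact Finset.sum_congr rfl fun r _ => by simp; ring
  rw [this, maxEnt_norm d hd, mul_one]

lemma oneSubP_psd (d : ℕ) (hd : 1 ≤ d) : (1 - projMaxEnt d).PosSemidef := by
  have hH : (1 - projMaxEnt d)ᴴ = 1 - projMaxEnt d := by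
    rw [conjTranspose_sub, conjTranspose_one, projMaxEnt_herm]
  have hI : (1 - projMaxEnt d) * (1 - projMaxEnt d) = 1 - projMaxEnt d := by
    simp only [sub_mul, mul_sub, one_mul, mul_one, projMaxEnt_idem d hd]
    abel
  have h : (1 - projMaxEnt d) = (1 - projMaxEnt d)ᴴ * (1 - projMaxEnt d) := by rw [hH, hI]
  rw [h]
  exact posSemidef_conjTranspose_mul_self _

lemma P_psd (d : ℕ) (hd : 1 ≤ d) : (projMaxEnt d).PosSemidef := by
  have h : projMaxEnt d = (projMaxEnt d)ᴴ * projMaxEnt d := by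
    rw [projMaxEnt_herm, projMaxEnt_idem d hd]
  rw [h]
  exact posSemidef_conjTranspose_mul_self _

/-- The linear functional implementing evaluation of the partial transpose at `ψ`. -/
def Ffun {d : ℕ} (ψ : Fin d × Fin d → ℂ) (A : Matrix (Fin d × Fin d) (Fin d × Fin d) ℂ) : ℂ :=
  ∑ p : Fin d × Fin d, ∑ q : Fin d × Fin d,
    (starRingEnd ℂ) (ψ (p.1, q.2)) * ψ (q.1, p.2) * A p q

lemma Ffun_add {d : ℕ} (ψ : Fin d × Fin d → ℂ) (A B : Matrix (Fin d × Fin d) (Fin d × Fin d) ℂ) :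
    Ffun ψ (A + B) = Ffun ψ A + Ffun ψ B := by
  simp [Ffun, Matrix.add_apply, mul_add, Finset.sum_add_distrib]

lemma Ffun_smul {d : ℕ} (ψ : Fin d × Fin d → ℂ) (z : ℂ)
    (A : Matrix (Fin d × Fin d) (Fin d × Fin d) ℂ) :
    Ffun ψ (z • A) = z * Ffun ψ A := by
  simp only [Ffun, Matrix.smul_apply, smul_eq_mul, Finset.mul_sum]
  exact Finset.sum_congr rfl fun p _ => Finset.sum_congr rfl fun q _ => by ring

lemma Ffun_sub {d : ℕ} (ψ : Fin d × Fin d → ℂ) (A B : Matrix (Fin d × Fin d) (Fin d × Fin d) ℂ) :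
    Ffun ψ (A - B) = Ffun ψ A - Ffun ψ B := by
  simp [Ffun, Matrix.sub_apply, mul_sub, Finset.sum_sub_distrib]

lemma Ffun_sum {d n : ℕ} (ψ : Fin d × Fin d → ℂ)
    (g : Fin n → Matrix (Fin d × Fin d) (Fin d × Fin d) ℂ) :
    Ffun ψ (∑ i, g i) = ∑ i, Ffun ψ (g i) := by
  classical
  induction (Finset.univ : Finset (Fin n)) using Finset.induction_on with
  | empty => simp [Ffun]
  | insert a s h ih => rw [Finset.sum_insert h, Finset.sum_insert h, Ffun_add, ih]

lemma Ffun_kron {d : ℕ} (ψ : Fin d × Fin d → ℂ) (M N : Matrix (Fin d) (Fin d) ℂ) :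
    Ffun ψ (M ⊗ₖ N) = star ψ ⬝ᵥ (M ⊗ₖ Nᵀ).mulVec ψ := by
  have key : ∀ (f : (Fin d × Fin d) → (Fin d × Fin d) → ℂ),
      (∑ p : Fin d × Fin d, ∑ q : Fin d × Fin d, f p q)
      = ∑ p : Fin d × Fin d, ∑ q : Fin d × Fin d, f (p.1, q.2) (q.1, p.2) := by
    intro f
    rw [← Fintype.sum_prod_type', ← Fintype.sum_prod_type']
    exact Fintype.sum_equiv ⟨fun r => ((r.1.1, r.2.2), (r.2.1, r.1.2)),
      fun r => ((r.1.1, r.2.2), (r.2.1, r.1.2)), fun r => rfl, fun r => rfl⟩ _ _ (fun r => rfl)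
  rw [Ffun, key (fun p q => (starRingEnd ℂ) (ψ (p.1, q.2)) * ψ (q.1, p.2) * (M ⊗ₖ N) p q)]
  simp only [mulVec, dotProduct, Pi.star_apply, Finset.mul_sum, kroneckerMap_apply,
    transpose_apply]
  refine Finset.sum_congr rfl fun p _ => Finset.sum_congr rfl fun q _ => ?_
  simp only [Prod.mk.eta, RCLike.star_def]
  ring

theorem stmt2 (d : ℕ) (hd : 2 ≤ d) (b : ℝ)
    (n : ℕ) (c : Fin n → ℝ) (M N : Fin n → Matrix (Fin d) (Fin d) ℂ)
    (hc : ∀ i, 0 ≤ c i)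
    (hM : ∀ i, IsRankOneProj (M i))
    (hN : ∀ i, IsRankOneProj (N i))
    (hT : projMaxEnt d + (b : ℂ) • (1 - projMaxEnt d) = ∑ i, (c i : ℂ) • (M i ⊗ₖ N i)) :
    1 / (d + 1 : ℝ) ≤ b ∧
    ∀ (σ : Matrix (Fin d × Fin d) (Fin d × Fin d) ℂ), σ.PosSemidef → σ.trace = 1 →
      ∀ θ : ℝ, (θ : ℂ) = star (maxEnt d) ⬝ᵥ σ.mulVec (maxEnt d) →
        ((d : ℝ) * θ + 1) / (d + 1 : ℝ) ≤
            (σ * (projMaxEnt d + (b : ℂ) • (1 - projMaxEnt d))).trace.re ∧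
        (σ * (projMaxEnt d + ((1 / (d + 1 : ℝ) : ℝ) : ℂ) • (1 - projMaxEnt d))).trace =
          ((((d : ℝ) * θ + 1) / (d + 1 : ℝ) : ℝ) : ℂ) := by
  have hd1 : 1 ≤ d := by omega
  have hd0 : (0:ℝ) < d := by exact_mod_cast hd1
  have hd1R : (0:ℝ) < d + 1 := by positivity
  -- the singular vector ψ
  set a0 : Fin d := ⟨0, by omega⟩ with ha0
  set a1 : Fin d := ⟨1, by omega⟩ with ha1
  have hne : a0 ≠ a1 := by
    intro h
    have := congrArg Fin.val h
    simp [ha0, ha1] at this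
  set ψ : Fin d × Fin d → ℂ :=
    fun p => (if p = (a0, a1) then 1 else 0) - (if p = (a1, a0) then 1 else 0) with hψ
  have hpair : ((a0, a1) : Fin d × Fin d) ≠ (a1, a0) := by
    intro h
    exact hne (congrArg Prod.fst h)
  have hψsq : ∀ p : Fin d × Fin d, (starRingEnd ℂ) (ψ p) * ψ p
      = (if p = (a0, a1) then 1 else 0) + (if p = (a1, a0) then 1 else 0) := by
    intro p
    by_cases h1 : p = (a0, a1)
    · subst h1
      simp [hψ, hpair]
    · by_cases h2 : p = (a1, a0)
      · subst h2
        simp [hψ, Ne.symm hpair]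
      · simp [hψ, h1, h2]
  have hψswap : ∀ i k : Fin d, ψ (k, i) = - ψ (i, k) := by
    intro i k
    have h1 : ((k, i) = ((a0 : Fin d), a1)) ↔ ((i, k) = (a1, a0)) := by
      constructor <;> (intro h; rw [Prod.ext_iff] at h ⊢; exact ⟨h.2, h.1⟩)
    have h2 : ((k, i) = ((a1 : Fin d), a0)) ↔ ((i, k) = (a0, a1)) := by
      constructor <;> (intro h; rw [Prod.ext_iff] at h ⊢; exact ⟨h.2, h.1⟩)
    simp only [hψ]
    rw [if_congr h1 rfl rfl, if_congr h2 rfl rfl]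
    ring
  have hψsum : (∑ p : Fin d × Fin d, ((if p = (a0, a1) then (1:ℂ) else 0)
      + (if p = (a1, a0) then 1 else 0))) = 2 := by
    rw [Finset.sum_add_distrib]
    rw [Finset.sum_ite_eq' Finset.univ ((a0, a1) : Fin d × Fin d) (fun _ => (1:ℂ)),
      Finset.sum_ite_eq' Finset.univ ((a1, a0) : Fin d × Fin d) (fun _ => (1:ℂ))]
    norm_num
  -- F of the identity
  have hF1 : Ffun ψ (1 : Matrix (Fin d × Fin d) (Fin d × Fin d) ℂ) = 2 := by
    rw [Ffun]
    have : ∀ p : Fin d × Fin d, (∑ q : Fin d × Fin d,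
        (starRingEnd ℂ) (ψ (p.1, q.2)) * ψ (q.1, p.2) * (1 : Matrix (Fin d × Fin d) (Fin d × Fin d) ℂ) p q)
        = (starRingEnd ℂ) (ψ p) * ψ p := by
      intro p
      rw [Finset.sum_eq_single p]
      · simp [Matrix.one_apply]
      · intro q _ hq
        simp [Matrix.one_apply, Ne.symm hq]
      · simp
    rw [Finset.sum_congr rfl fun p _ => this p]
    rw [Finset.sum_congr rfl fun p _ => hψsq p]
    exact hψsum
  -- F of the projection P
  have hsq : ((1 / Real.sqrt d : ℝ) : ℂ) * ((1 / Real.sqrt d : ℝ) : ℂ) = ((1/d : ℝ) : ℂ) := by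
    rw [← Complex.ofReal_mul]
    congr 1
    rw [div_mul_div_comm, one_mul, Real.mul_self_sqrt hd0.le]
  have hFP : Ffun ψ (projMaxEnt d) = -2 * ((1/d : ℝ) : ℂ) := by
    rw [Ffun]
    simp only [projMaxEnt, vecMulVec_apply, Pi.star_apply, maxEnt, Fintype.sum_prod_type]
    -- variables: p = (i,l), q = (k,j)
    have step : ∀ i l : Fin d, (∑ k : Fin d, ∑ j : Fin d,
        (starRingEnd ℂ) (ψ (i, j)) * ψ (k, l) *
        ((if i = l then ((1 / Real.sqrt d : ℝ) : ℂ) else 0) *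
          star (if k = j then ((1 / Real.sqrt d : ℝ) : ℂ) else 0)))
        = if i = l then (∑ k : Fin d, (starRingEnd ℂ) (ψ (i, k)) * ψ (k, i) * ((1/d : ℝ) : ℂ)) else 0 := by
      intro i l
      by_cases h : i = l
      · subst h
        rw [if_pos (rfl : (i : Fin d) = i), if_pos (rfl : (i : Fin d) = i)]
        refine Finset.sum_congr rfl fun k _ => ?_
        have hterm : ∀ j : Fin d, (starRingEnd ℂ) (ψ (i, j)) * ψ (k, i) *
            (((1 / Real.sqrt d : ℝ) : ℂ) *
              star (if k = j then ((1 / Real.sqrt d : ℝ) : ℂ) else 0))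
            = if k = j then (starRingEnd ℂ) (ψ (i, j)) * ψ (k, i) * ((1/d : ℝ) : ℂ) else 0 := by
          intro j
          by_cases hkj : k = j
          · rw [if_pos hkj, if_pos hkj, RCLike.star_def, Complex.conj_ofReal, ← hsq]
          · rw [if_neg hkj, if_neg hkj, star_zero, mul_zero, mul_zero]
        rw [Finset.sum_congr rfl fun j _ => hterm j]
        simpa using Finset.sum_ite_eq Finset.univ k
          (fun j => (starRingEnd ℂ) (ψ (i, j)) * ψ (k, i) * ((1/d : ℝ) : ℂ))
      · rw [if_neg h, if_neg h]
        refine Finset.sum_eq_zero fun k _ => Finset.sum_eq_zero fun j _ => ?_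
        ring
    rw [Finset.sum_congr rfl fun i _ => Finset.sum_congr rfl fun l _ => step i l]
    have step2 : ∀ i : Fin d, (∑ l : Fin d, if i = l then
        (∑ k : Fin d, (starRingEnd ℂ) (ψ (i, k)) * ψ (k, i) * ((1/d : ℝ) : ℂ)) else 0)
        = ∑ k : Fin d, (starRingEnd ℂ) (ψ (i, k)) * ψ (k, i) * ((1/d : ℝ) : ℂ) := by
      intro i
      simpa using Finset.sum_ite_eq Finset.univ i
        (fun _ => ∑ k : Fin d, (starRingEnd ℂ) (ψ (i, k)) * ψ (k, i) * ((1/d : ℝ) : ℂ))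
    rw [Finset.sum_congr rfl fun i _ => step2 i]
    have step3 : ∀ i k : Fin d, (starRingEnd ℂ) (ψ (i, k)) * ψ (k, i) * ((1/d : ℝ) : ℂ)
        = -(((if ((i,k) : Fin d × Fin d) = (a0, a1) then (1:ℂ) else 0)
            + (if ((i,k) : Fin d × Fin d) = (a1, a0) then 1 else 0)) * ((1/d : ℝ) : ℂ)) := by
      intro i k
      rw [hψswap i k, ← hψsq (i, k)]
      ring
    rw [Finset.sum_congr rfl fun i _ => Finset.sum_congr rfl fun k _ => step3 i k]
    rw [← Fintype.sum_prod_type']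
    have heta : ∀ p : Fin d × Fin d,
        -(((if ((p.1, p.2) : Fin d × Fin d) = (a0, a1) then (1:ℂ) else 0)
          + (if ((p.1, p.2) : Fin d × Fin d) = (a1, a0) then 1 else 0)) * ((1/d : ℝ) : ℂ))
        = -(((if p = (a0, a1) then (1:ℂ) else 0)
          + (if p = (a1, a0) then 1 else 0)) * ((1/d : ℝ) : ℂ)) := by
      intro p
      rw [Prod.mk.eta]
    rw [Finset.sum_congr rfl fun p _ => heta p]
    rw [Finset.sum_neg_distrib, ← Finset.sum_mul, hψsum]
    ring
  -- F applied to the decomposition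
  have hmain := congrArg (Ffun ψ) hT
  rw [Ffun_add, Ffun_smul, Ffun_sub, Ffun_sum, hF1, hFP] at hmain
  have hrhs_nonneg : 0 ≤ ∑ i, Ffun ψ ((c i : ℂ) • (M i ⊗ₖ N i)) := by
    refine Finset.sum_nonneg fun i _ => ?_
    rw [Ffun_smul, Ffun_kron]
    have hMpsd : (M i).PosSemidef := by
      obtain ⟨h1, h2, _⟩ := hM i
      have : M i = (M i)ᴴ * (M i) := by rw [h1, h2]
      rw [this]; exact posSemidef_conjTranspose_mul_self _
    have hNpsd : ((N i)ᵀ).PosSemidef := by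
      obtain ⟨h1, h2, _⟩ := hN i
      have h3 : (N i).PosSemidef := by
        have : N i = (N i)ᴴ * (N i) := by rw [h1, h2]
        rw [this]; exact posSemidef_conjTranspose_mul_self _
      exact h3.transpose
    have hk := (psd_kron hMpsd hNpsd).dotProduct_mulVec_nonneg ψ
    have hcge : (0:ℂ) ≤ (c i : ℂ) := by
      rw [Complex.le_def]
      simp [hc i]
    exact mul_nonneg hcge hk
  rw [← hmain] at hrhs_nonneg
  -- extract the real inequality
  have hreal : 0 ≤ -2 * (1/(d:ℝ)) + b * (2 - (-2) * (1/(d:ℝ))) := by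
    have := hrhs_nonneg.1
    simp only [Complex.add_re, Complex.mul_re, Complex.ofReal_re, Complex.ofReal_im,
      Complex.sub_re, Complex.sub_im, Complex.neg_re, Complex.neg_im] at this
    convert this using 1 <;> norm_num
  have hb : 1 / (d + 1 : ℝ) ≤ b := by
    have hXd : (-2*(1/(d:ℝ)) + b*(2 - (-2)*(1/(d:ℝ)))) * (d:ℝ) = -2 + b*(2*(d:ℝ)+2) := by
      field_simp
      ring
    have h2 : (0:ℝ) ≤ -2 + b*(2*(d:ℝ)+2) := by
      rw [← hXd]
      exact mul_nonneg hreal hd0.le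
    rw [div_le_iff₀ hd1R]
    nlinarith [h2]
  refine ⟨hb, ?_⟩
  intro σ hσ hσtr θ hθ
  have hTrP : (σ * projMaxEnt d).trace = (θ : ℂ) := by
    rw [projMaxEnt, trace_mul_vecMulVec]
    exact hθ.symm
  have hTr : ∀ t : ℝ, (σ * (projMaxEnt d + (t:ℂ) • (1 - projMaxEnt d))).trace
      = ((θ + t * (1 - θ) : ℝ) : ℂ) := by
    intro t
    rw [mul_add, trace_add, hTrP, Matrix.mul_smul, trace_smul, mul_sub, trace_sub, mul_one,
      hσtr, hTrP, smul_eq_mul]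
    push_cast
    ring
  have hθ1 : θ ≤ 1 := by
    have h0 : 0 ≤ (σ * (1 - projMaxEnt d)).trace :=
      trace_mul_psd_nonneg hσ (oneSubP_psd d hd1)
    have heq : (σ * (1 - projMaxEnt d)).trace = ((1 - θ : ℝ) : ℂ) := by
      rw [mul_sub, trace_sub, mul_one, hσtr, hTrP]
      push_cast
      ring
    rw [heq] at h0
    have := h0.1
    simp only [Complex.ofReal_re, Complex.zero_re] at this
    linarith
  constructor
  · rw [hTr b, Complex.ofReal_re]
    rw [div_le_iff₀ hd1R]
    have hbd : 1 ≤ b * ((d:ℝ) + 1) := by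
      rw [div_le_iff₀ hd1R] at hb
      linarith
    nlinarith [mul_nonneg (sub_nonneg.2 hθ1) (sub_nonneg.2 hbd)]
  · rw [hTr (1/(d+1:ℝ))]
    congr 1
    field_simp
    ring
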